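/- Let n ≥ 2 and f ∈ C⁰(closure of ℝⁿ₊). Suppose that for every x ∈ ∂ℝⁿ₊ and every λ > 0 one has f(y) ≥ f( x + λ²(y−x)/|y−x|² ) + ln(λ/|y−x|) for all y ∈ ℝⁿ₊ with |y − x| ≥ λ. Then f(y', y_n) = f(0', y_n) for all y = (y', y_n) ∈ ℝⁿ₊; that is, f depends only on the last coordinate y_n. -/

import Mathlib

open Real Filter
open scoped RealInnerProductSpace Topology


set_option maxHeartbeats 1000000 in
lemma aux_ms (n : ℕ) (i : Fin n) (f : EuclideanSpace ℝ (Fin n) → ℝ)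
    (hf : ContinuousOn f {x | 0 ≤ x i})
    (h : ∀ x : EuclideanSpace ℝ (Fin n), x i = 0 → ∀ lam : ℝ, 0 < lam →
      ∀ y : EuclideanSpace ℝ (Fin n), 0 < y i → lam ≤ ‖y - x‖ →
        f (x + (lam ^ 2 / ‖y - x‖ ^ 2) • (y - x)) + Real.log (lam / ‖y - x‖) ≤ f y)
    (y z : EuclideanSpace ℝ (Fin n)) (hy : 0 < y i) (hz : z i = y i) :
    f z ≤ f y := by
  by_cases hzy : z = y
  · exact le_of_eq (by rw [hzy])
  set w := y - z with hw_def
  have hw : w ≠ 0 := sub_ne_zero.mpr fun e => hzy e.symm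
  have hwi : w i = 0 := by simp [hw_def, hz]
  set nw := ‖w‖ with hnw_def
  have hnw : 0 < nw := norm_pos_iff.mpr hw
  set u := nw⁻¹ • w with hu_def
  have hui : u i = 0 := by simp [hu_def, hwi]
  have hu1 : ‖u‖ = 1 := norm_smul_inv_norm hw
  set m := (2:ℝ)⁻¹ • (y + z) with hm_def
  set x₀ := m - EuclideanSpace.single i (m i) with hx₀_def
  have hx₀i : x₀ i = 0 := by simp [hx₀_def]
  set a := y - x₀ with ha_def
  have ha_eq : a = (2:ℝ)⁻¹ • w + EuclideanSpace.single i (m i) := by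
    simp only [ha_def, hx₀_def, hw_def]
    module
  have hwu : ⟪w, u⟫ = nw := by
    rw [hu_def, real_inner_smul_right, real_inner_self_eq_norm_sq, ← hnw_def]
    field_simp
  have hsu : ⟪EuclideanSpace.single i (m i), u⟫ = 0 := by
    simp [EuclideanSpace.inner_single_left, hui]
  have hau : ⟪a, u⟫ = nw / 2 := by
    rw [ha_eq, inner_add_left, real_inner_smul_left, hwu, hsu]; ring
  set c2 := ‖a‖ ^ 2 with hc2_def
  have hc2 : 0 ≤ c2 := sq_nonneg _
  set D := fun R : ℝ => R ^ 2 + R * nw + c2 with hD_def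
  set X := fun R : ℝ => x₀ - R • u with hX_def
  have hyX : ∀ R : ℝ, y - X R = a + R • u := by
    intro R; simp only [hX_def, ha_def]; abel
  have hnormX : ∀ R : ℝ, ‖y - X R‖ ^ 2 = D R := by
    intro R
    rw [hyX, norm_add_sq_real, real_inner_smul_right, norm_smul, hau, hu1,
      Real.norm_eq_abs]
    show _ = R ^ 2 + R * nw + c2
    rw [hc2_def]
    rw [mul_one, sq_abs]
    ring
  have hDpos : ∀ R : ℝ, 0 < R → 0 < D R := by
    intro R hR
    show (0:ℝ) < R ^ 2 + R * nw + c2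
    nlinarith [sq_nonneg R, mul_pos hR hnw]
  have hDne : ∀ R : ℝ, 0 < R → D R ≠ 0 := fun R hR => (hDpos R hR).ne'
  have hkey2 : ∀ R : ℝ, 0 < R → R ^ 2 * (1 + nw * R⁻¹ + c2 * R⁻¹ ^ 2) = D R := by
    intro R hR
    show _ = R ^ 2 + R * nw + c2
    field_simp
  have hdenne : ∀ R : ℝ, 0 < R → (1 + nw * R⁻¹ + c2 * R⁻¹ ^ 2) ≠ 0 := by
    intro R hR e
    exact hDne R hR (by rw [← hkey2 R hR, e, mul_zero])
  have hRle : ∀ R : ℝ, 0 < R → R ≤ ‖y - X R‖ := by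
    intro R hR
    have h1 : R ^ 2 ≤ ‖y - X R‖ ^ 2 := by
      rw [hnormX]
      show R ^ 2 ≤ R ^ 2 + R * nw + c2
      nlinarith [mul_pos hR hnw]
    exact le_of_pow_le_pow_left₀ two_ne_zero (norm_nonneg _) h1
  have hXi : ∀ R : ℝ, X R i = 0 := by
    intro R; simp [hX_def, hx₀i, hui]
  set g := fun R : ℝ => X R + (R ^ 2 / ‖y - X R‖ ^ 2) • (y - X R) with hg_def
  have hyXi : ∀ R : ℝ, (y - X R) i = y i := by
    intro R; simp [hXi R]
  have hgi : ∀ R : ℝ, 0 < R → 0 < g R i := by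
    intro R hR
    have hD := hDpos R hR
    rw [← hnormX R] at hD
    have : g R i = (R ^ 2 / ‖y - X R‖ ^ 2) * y i := by
      simp [hg_def, hXi R, hyXi R]
    rw [this]
    exact mul_pos (div_pos (pow_pos hR 2) hD) hy
  have key : ∀ R : ℝ, 0 < R → f (g R) + Real.log (R / ‖y - X R‖) ≤ f y := by
    intro R hR
    exact h (X R) (hXi R) R hR y hy (hRle R hR)
  -- limits
  have hinv : Tendsto (fun R : ℝ => R⁻¹) atTop (𝓝 0) := tendsto_inv_atTop_zero
  have hden : Tendsto (fun R : ℝ => 1 + nw * R⁻¹ + c2 * R⁻¹ ^ 2) atTop (𝓝 1) := by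
    have := ((tendsto_const_nhds (x := (1:ℝ))).add (hinv.const_mul nw)).add ((hinv.pow 2).const_mul c2)
    simpa using this
  have hs : Tendsto (fun R : ℝ => R ^ 2 / D R) atTop (𝓝 1) := by
    have heq : ∀ᶠ R : ℝ in atTop, (1 + nw * R⁻¹ + c2 * R⁻¹ ^ 2)⁻¹ = R ^ 2 / D R := by
      filter_upwards [eventually_gt_atTop 0] with R hR
      rw [← hkey2 R hR, div_mul_cancel_left₀ (pow_ne_zero 2 hR.ne')]
    have hlim : Tendsto (fun R : ℝ =>
        (1 + nw * R⁻¹ + c2 * R⁻¹ ^ 2)⁻¹) atTop (𝓝 1) := by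
      have := hden.inv₀ one_ne_zero
      simpa using this
    exact hlim.congr' heq
  have ht : Tendsto (fun R : ℝ => R ^ 2 / D R * R - R) atTop (𝓝 (-nw)) := by
    have heq : ∀ᶠ R : ℝ in atTop,
        -((nw + c2 * R⁻¹) / (1 + nw * R⁻¹ + c2 * R⁻¹ ^ 2)) = R ^ 2 / D R * R - R := by
      filter_upwards [eventually_gt_atTop 0] with R hR
      have h1 := hdenne R hR
      have h2 : D R = R ^ 2 + R * nw + c2 := rfl
      have h3 : (R:ℝ) ≠ 0 := hR.ne'
      have h4 : R ^ 2 + R * nw + c2 ≠ 0 := by rw [← h2]; exact hDne R hR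
      rw [h2]
      field_simp
      ring
    have hnum : Tendsto (fun R : ℝ => nw + c2 * R⁻¹) atTop (𝓝 nw) := by
      have := (tendsto_const_nhds (x := nw)).add (hinv.const_mul c2)
      simpa using this
    have hlim : Tendsto (fun R : ℝ =>
        -((nw + c2 * R⁻¹) / (1 + nw * R⁻¹ + c2 * R⁻¹ ^ 2))) atTop (𝓝 (-nw)) := by
      have := (hnum.div hden one_ne_zero).neg
      simpa using this
    exact hlim.congr' heq
  have hg_eq : ∀ᶠ R : ℝ in atTop,
      x₀ + (R ^ 2 / D R) • a + (R ^ 2 / D R * R - R) • u = g R := by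
    filter_upwards [eventually_gt_atTop 0] with R hR
    simp only [hg_def]
    rw [hnormX R, hyX R]
    simp only [hX_def]
    module
  have hlim_pt : x₀ + (1:ℝ) • a + (-nw) • u = z := by
    rw [one_smul, hu_def, smul_smul]
    have hne : -nw * nw⁻¹ = -1 := by field_simp
    rw [hne]
    simp only [ha_def, hw_def]
    module
  have hgz : Tendsto g atTop (𝓝 z) := by
    have hlim := ((tendsto_const_nhds (x := x₀)).add (hs.smul_const a)).add (ht.smul_const u)
    rw [hlim_pt] at hlim
    exact hlim.congr' hg_eq
  have hlog : Tendsto (fun R : ℝ => Real.log (R / ‖y - X R‖)) atTop (𝓝 0) := by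
    have hfrac : ∀ᶠ R : ℝ in atTop, Real.sqrt (R ^ 2 / D R) = R / ‖y - X R‖ := by
      filter_upwards [eventually_gt_atTop 0] with R hR
      rw [Real.sqrt_div (sq_nonneg R), Real.sqrt_sq hR.le, ← hnormX,
        Real.sqrt_sq (norm_nonneg _)]
    have h1 : Tendsto (fun R : ℝ => R / ‖y - X R‖) atTop (𝓝 1) := by
      have hlim : Tendsto (fun R : ℝ => Real.sqrt (R ^ 2 / D R)) atTop (𝓝 1) := by
        simpa using hs.sqrt
      exact hlim.congr' hfrac
    have := (Real.continuousAt_log one_ne_zero).tendsto.comp h1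
    simpa [Function.comp_def] using this
  have hfg : Tendsto (fun R : ℝ => f (g R)) atTop (𝓝 (f z)) := by
    have hcw : ContinuousWithinAt f {x | 0 ≤ x i} z := hf z (by simp [hz, hy.le])
    have hmem : ∀ᶠ R : ℝ in atTop, g R ∈ {x : EuclideanSpace ℝ (Fin n) | 0 ≤ x i} := by
      filter_upwards [eventually_gt_atTop 0] with R hR
      exact (hgi R hR).le
    exact hcw.tendsto.comp (tendsto_nhdsWithin_iff.mpr ⟨hgz, hmem⟩)
  have hfin := le_of_tendsto (hfg.add hlog) (by
    filter_upwards [eventually_gt_atTop 0] with R hR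
    exact key R hR)
  simpa using hfin

/-- Moving-spheres lemma with logarithmic term in the half space: if
`f(y) ≥ f(x + λ²(y-x)/|y-x|²) + ln(λ/|y-x|)` for all boundary points `x`, all
`λ > 0` and all `y` in the upper half space with `|y-x| ≥ λ`, then `f` depends
only on the last coordinate (indexed by `i`). -/
theorem moving_spheres_halfspace_log
    (n : ℕ) (hn : 2 ≤ n)
    (i : Fin n) (hi : (i : ℕ) = n - 1)
    (f : EuclideanSpace ℝ (Fin n) → ℝ)
    (hf : ContinuousOn f {x | 0 ≤ x i})
    (h : ∀ x : EuclideanSpace ℝ (Fin n), x i = 0 → ∀ lam : ℝ, 0 < lam →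
      ∀ y : EuclideanSpace ℝ (Fin n), 0 < y i → lam ≤ ‖y - x‖ →
        f (x + (lam ^ 2 / ‖y - x‖ ^ 2) • (y - x)) + Real.log (lam / ‖y - x‖) ≤ f y) :
    ∀ y : EuclideanSpace ℝ (Fin n), 0 < y i →
      f y = f (EuclideanSpace.single i (y i)) := by
  intro y hy
  have hsi : (EuclideanSpace.single i (y i)) i = y i := by simp
  have hsi' : 0 < (EuclideanSpace.single i (y i)) i := by rw [hsi]; exact hy
  refine le_antisymm ?_ ?_
  · exact aux_ms n i f hf h (EuclideanSpace.single i (y i)) y hsi' hsi.symm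
  · exact aux_ms n i f hf h y (EuclideanSpace.single i (y i)) hy hsi
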